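/- Fix κ > 0 and let g_κ(r) := e^{−κr}/(4πr). For any three distinct points y₁, y₂, y₃ on the unit sphere S² ⊂ ℝ³, ∑_{j ≠ j'} g_κ(‖y_j − y_{j'}‖) ≥ 6 g_κ(√3), with equality if and only if all three pairwise distances ‖y_j − y_{j'}‖ equal √3, i.e. the points are the vertices of an equilateral triangle inscribed in a great circle of the sphere. -/

import Mathlib

/-- The free resolvent kernel of `−Δ` in `ℝ³` at energy `−κ²`:
`g_κ(r) = e^{−κr}/(4πr)`. -/
noncomputable def resolventKernel3D (κ r : ℝ) : ℝ :=
  Real.exp (-κ * r) / (4 * Real.pi * r)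

/-- The interaction energy `∑_{j ≠ j'} g_κ(‖y_j − y_{j'}‖)` of a family of points,
the sum running over ordered pairs of distinct indices. -/
noncomputable def interactionEnergy {n : ℕ} (κ : ℝ)
    (y : Fin n → EuclideanSpace ℝ (Fin 3)) : ℝ :=
  ∑ p ∈ Finset.univ.offDiag, resolventKernel3D κ ‖y p.1 - y p.2‖

/-- `F κ s = g_κ(√s)`. -/
noncomputable def sqKernel (κ s : ℝ) : ℝ :=
  Real.exp (-κ * Real.sqrt s) / (4 * Real.pi * Real.sqrt s)

noncomputable def sqKernel' (κ s : ℝ) : ℝ :=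
  -(Real.exp (-κ * Real.sqrt s) * (κ * Real.sqrt s + 1)) / (8 * Real.pi * s * Real.sqrt s)

noncomputable def sqKernel'' (κ s : ℝ) : ℝ :=
  Real.exp (-κ * Real.sqrt s) * (κ ^ 2 * s + 3 * κ * Real.sqrt s + 3)
    / (16 * Real.pi * s ^ 2 * Real.sqrt s)

lemma hasDerivAt_sqKernel (κ : ℝ) {s : ℝ} (hs : 0 < s) :
    HasDerivAt (sqKernel κ) (sqKernel' κ s) s := by
  have hu : 0 < Real.sqrt s := Real.sqrt_pos.2 hs
  have hsq : Real.sqrt s * Real.sqrt s = s := Real.mul_self_sqrt hs.le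
  have h1 : HasDerivAt Real.sqrt (1 / (2 * Real.sqrt s)) s := Real.hasDerivAt_sqrt hs.ne'
  have h2 : HasDerivAt (fun t => Real.exp (-κ * Real.sqrt t))
      (Real.exp (-κ * Real.sqrt s) * (-κ * (1 / (2 * Real.sqrt s)))) s :=
    (h1.const_mul (-κ)).exp
  have h3 : HasDerivAt (fun t => 4 * Real.pi * Real.sqrt t)
      (4 * Real.pi * (1 / (2 * Real.sqrt s))) s := h1.const_mul _
  have h4 := h2.div h3 (by positivity)
  have h4' : HasDerivAt (sqKernel κ) _ s := h4
  convert h4' using 1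
  have hπ := Real.pi_pos
  rw [sqKernel']
  field_simp
  linear_combination (-8 - 8 * κ * Real.sqrt s) * hsq

lemma hasDerivAt_sqKernel' (κ : ℝ) {s : ℝ} (hs : 0 < s) :
    HasDerivAt (sqKernel' κ) (sqKernel'' κ s) s := by
  have hu : 0 < Real.sqrt s := Real.sqrt_pos.2 hs
  have hsq : Real.sqrt s * Real.sqrt s = s := Real.mul_self_sqrt hs.le
  have h1 : HasDerivAt Real.sqrt (1 / (2 * Real.sqrt s)) s := Real.hasDerivAt_sqrt hs.ne'
  have h2 : HasDerivAt (fun t => Real.exp (-κ * Real.sqrt t))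
      (Real.exp (-κ * Real.sqrt s) * (-κ * (1 / (2 * Real.sqrt s)))) s :=
    (h1.const_mul (-κ)).exp
  have hN : HasDerivAt (fun t => -(Real.exp (-κ * Real.sqrt t) * (κ * Real.sqrt t + 1)))
      (-(Real.exp (-κ * Real.sqrt s) * (-κ * (1 / (2 * Real.sqrt s))) * (κ * Real.sqrt s + 1)
        + Real.exp (-κ * Real.sqrt s) * (κ * (1 / (2 * Real.sqrt s))))) s :=
    (h2.mul ((h1.const_mul κ).add_const 1)).neg
  have hD : HasDerivAt (fun t => 8 * Real.pi * (t * Real.sqrt t))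
      (8 * Real.pi * (1 * Real.sqrt s + s * (1 / (2 * Real.sqrt s)))) s :=
    ((hasDerivAt_id s).mul h1).const_mul _
  have h4 := hN.div hD (by positivity)
  have heq : sqKernel' κ = fun t =>
      -(Real.exp (-κ * Real.sqrt t) * (κ * Real.sqrt t + 1)) / (8 * Real.pi * (t * Real.sqrt t)) := by
    funext t; rw [sqKernel']; ring_nf
  rw [heq]
  have h4' : HasDerivAt (fun t =>
      -(Real.exp (-κ * Real.sqrt t) * (κ * Real.sqrt t + 1)) / (8 * Real.pi * (t * Real.sqrt t))) _ s := h4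
  convert h4' using 1
  rw [sqKernel'']
  field_simp
  linear_combination (16 + 16 * κ * Real.sqrt s) * hsq

lemma sqKernel'_neg {κ s : ℝ} (hκ : 0 < κ) (hs : 0 < s) : sqKernel' κ s < 0 := by
  have hu : 0 < Real.sqrt s := Real.sqrt_pos.2 hs
  have hπ := Real.pi_pos
  have hE : 0 < Real.exp (-κ * Real.sqrt s) := Real.exp_pos _
  rw [sqKernel']
  apply div_neg_of_neg_of_pos
  · have h1 : 0 < κ * Real.sqrt s + 1 := by nlinarith [mul_pos hκ hu]
    nlinarith [mul_pos hE h1]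
  · positivity

lemma sqKernel''_pos {κ s : ℝ} (hκ : 0 < κ) (hs : 0 < s) : 0 < sqKernel'' κ s := by
  have hu : 0 < Real.sqrt s := Real.sqrt_pos.2 hs
  have hπ := Real.pi_pos
  rw [sqKernel'']
  positivity

lemma sqKernel'_strictMonoOn {κ : ℝ} (hκ : 0 < κ) :
    StrictMonoOn (sqKernel' κ) (Set.Ioi 0) := by
  apply strictMonoOn_of_deriv_pos (convex_Ioi 0)
  · exact fun x hx => (hasDerivAt_sqKernel' κ hx).continuousAt.continuousWithinAt
  · intro x hx
    rw [interior_Ioi] at hx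
    rw [(hasDerivAt_sqKernel' κ hx).deriv]
    exact sqKernel''_pos hκ hx

/-- Tangent line inequality at `s = 3`. -/
lemma sqKernel_tangent {κ s : ℝ} (hκ : 0 < κ) (hs : 0 < s) :
    sqKernel κ 3 + sqKernel' κ 3 * (s - 3) ≤ sqKernel κ s ∧
      (s ≠ 3 → sqKernel κ 3 + sqKernel' κ 3 * (s - 3) < sqKernel κ s) := by
  set h : ℝ → ℝ := fun t => sqKernel κ t - sqKernel' κ 3 * t with hh
  have h3 : (0:ℝ) < 3 := by norm_num
  have hd : ∀ t : ℝ, 0 < t → HasDerivAt h (sqKernel' κ t - sqKernel' κ 3) t := by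
    intro t ht
    have := (hasDerivAt_sqKernel κ ht).sub ((hasDerivAt_id t).const_mul (sqKernel' κ 3))
    exact this.congr_deriv (by simp)
  have hmono : StrictMonoOn h (Set.Ici 3) := by
    apply strictMonoOn_of_deriv_pos (convex_Ici 3)
    · exact fun x hx => (hd x (lt_of_lt_of_le h3 hx)).continuousAt.continuousWithinAt
    · intro x hx
      rw [interior_Ici] at hx
      rw [(hd x (h3.trans hx)).deriv]
      have := sqKernel'_strictMonoOn hκ (Set.mem_Ioi.2 h3) (Set.mem_Ioi.2 (h3.trans hx)) hx
      linarith
  have hanti : StrictAntiOn h (Set.Ioc 0 3) := by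
    apply strictAntiOn_of_deriv_neg (convex_Ioc 0 3)
    · exact fun x hx => (hd x hx.1).continuousAt.continuousWithinAt
    · intro x hx
      rw [interior_Ioc] at hx
      rw [(hd x hx.1).deriv]
      have := sqKernel'_strictMonoOn hκ (Set.mem_Ioi.2 hx.1) (Set.mem_Ioi.2 h3) hx.2
      linarith
  have key : s ≠ 3 → h 3 < h s := by
    intro hne
    rcases lt_or_gt_of_ne hne with hlt | hgt
    · exact hanti (Set.mem_Ioc.2 ⟨hs, hlt.le⟩) (Set.mem_Ioc.2 ⟨h3, le_refl 3⟩) hlt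
    · exact hmono (Set.mem_Ici.2 (le_refl 3)) (Set.mem_Ici.2 hgt.le) hgt
  constructor
  · rcases eq_or_ne s 3 with rfl | hne
    · simp
    · have := key hne
      simp only [hh] at this
      linarith
  · intro hne
    have := key hne
    simp only [hh] at this
    linarith

lemma sqKernel_sq_norm (κ : ℝ) (x : EuclideanSpace ℝ (Fin 3)) :
    sqKernel κ (‖x‖ ^ 2) = resolventKernel3D κ ‖x‖ := by
  rw [sqKernel, Real.sqrt_sq (norm_nonneg x)]; rfl

lemma sum_dist_sq_le_nine (a b c : EuclideanSpace ℝ (Fin 3))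
    (ha : ‖a‖ = 1) (hb : ‖b‖ = 1) (hc : ‖c‖ = 1) :
    ‖a - b‖ ^ 2 + ‖a - c‖ ^ 2 + ‖b - c‖ ^ 2 ≤ 9 := by
  have key : (0:ℝ) ≤ ‖a + b + c‖ ^ 2 := sq_nonneg _
  have e0 : ‖a + b + c‖ ^ 2 = ‖a + b‖ ^ 2 + 2 * (inner ℝ (a + b) c : ℝ) + ‖c‖ ^ 2 :=
    norm_add_sq_real _ _
  have e0' : ‖a + b‖ ^ 2 = ‖a‖ ^ 2 + 2 * (inner ℝ a b : ℝ) + ‖b‖ ^ 2 := norm_add_sq_real _ _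
  have e0'' : (inner ℝ (a + b) c : ℝ) = (inner ℝ a c : ℝ) + (inner ℝ b c : ℝ) := inner_add_left _ _ _
  have e1 : ‖a - b‖ ^ 2 = ‖a‖ ^ 2 - 2 * (inner ℝ a b : ℝ) + ‖b‖ ^ 2 := norm_sub_sq_real _ _
  have e2 : ‖a - c‖ ^ 2 = ‖a‖ ^ 2 - 2 * (inner ℝ a c : ℝ) + ‖c‖ ^ 2 := norm_sub_sq_real _ _
  have e3 : ‖b - c‖ ^ 2 = ‖b‖ ^ 2 - 2 * (inner ℝ b c : ℝ) + ‖c‖ ^ 2 := norm_sub_sq_real _ _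
  rw [e0, e0', e0''] at key
  rw [e1, e2, e3, ha, hb, hc]
  rw [ha, hb, hc] at key
  nlinarith [key]



/-- For any three distinct points on the unit sphere S² ⊂ ℝ³,
∑_{j ≠ j'} g_κ(‖y_j − y_{j'}‖) ≥ 6 g_κ(√3), with equality iff all three pairwise
distances equal √3 (the vertices of an equilateral triangle in a great circle). -/
theorem sphere_three_points_energy_min (κ : ℝ) (hκ : 0 < κ)
    (y : Fin 3 → EuclideanSpace ℝ (Fin 3)) (hsphere : ∀ j, ‖y j‖ = 1)
    (hdist : Function.Injective y) :
    interactionEnergy κ y ≥ 6 * resolventKernel3D κ (Real.sqrt 3) ∧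
    (interactionEnergy κ y = 6 * resolventKernel3D κ (Real.sqrt 3) ↔
      ∀ j j' : Fin 3, j ≠ j' → ‖y j - y j'‖ = Real.sqrt 3) := by
  have h3 : (0:ℝ) < 3 := by norm_num
  have hne : ∀ j j' : Fin 3, j ≠ j' → (0:ℝ) < ‖y j - y j'‖ := by
    intro j j' hjj'
    have : y j - y j' ≠ 0 := sub_ne_zero.2 fun h => hjj' (hdist h)
    exact norm_pos_iff.2 this
  have hs1 : (0:ℝ) < ‖y 0 - y 1‖ ^ 2 := pow_pos (hne 0 1 (by decide)) 2
  have hs2 : (0:ℝ) < ‖y 0 - y 2‖ ^ 2 := pow_pos (hne 0 2 (by decide)) 2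
  have hs3 : (0:ℝ) < ‖y 1 - y 2‖ ^ 2 := pow_pos (hne 1 2 (by decide)) 2
  have hsum : ‖y 0 - y 1‖ ^ 2 + ‖y 0 - y 2‖ ^ 2 + ‖y 1 - y 2‖ ^ 2 ≤ 9 :=
    sum_dist_sq_le_nine _ _ _ (hsphere 0) (hsphere 1) (hsphere 2)
  -- Evaluate the interaction energy
  have hE : interactionEnergy κ y =
      2 * (sqKernel κ (‖y 0 - y 1‖ ^ 2) + sqKernel κ (‖y 0 - y 2‖ ^ 2)
        + sqKernel κ (‖y 1 - y 2‖ ^ 2)) := by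
    rw [interactionEnergy,
      show (Finset.univ.offDiag : Finset (Fin 3 × Fin 3)) =
        {(0,1),(0,2),(1,0),(1,2),(2,0),(2,1)} from by decide,
      Finset.sum_insert (by decide), Finset.sum_insert (by decide),
      Finset.sum_insert (by decide), Finset.sum_insert (by decide),
      Finset.sum_insert (by decide), Finset.sum_singleton]
    simp only [sqKernel_sq_norm]
    rw [norm_sub_rev (y 1) (y 0), norm_sub_rev (y 2) (y 0), norm_sub_rev (y 2) (y 1)]
    ring
  have hT : resolventKernel3D κ (Real.sqrt 3) = sqKernel κ 3 := rfl
  have hm : sqKernel' κ 3 < 0 := sqKernel'_neg hκ h3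
  have hd1 := sqKernel_tangent hκ hs1
  have hd2 := sqKernel_tangent hκ hs2
  have hd3 := sqKernel_tangent hκ hs3
  have he : 0 ≤ sqKernel' κ 3 * (‖y 0 - y 1‖ ^ 2 + ‖y 0 - y 2‖ ^ 2 + ‖y 1 - y 2‖ ^ 2 - 9) :=
    mul_nonneg_of_nonpos_of_nonpos hm.le (by linarith)
  have hsplit : sqKernel' κ 3 * (‖y 0 - y 1‖ ^ 2 - 3) + sqKernel' κ 3 * (‖y 0 - y 2‖ ^ 2 - 3)
      + sqKernel' κ 3 * (‖y 1 - y 2‖ ^ 2 - 3)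
      = sqKernel' κ 3 * (‖y 0 - y 1‖ ^ 2 + ‖y 0 - y 2‖ ^ 2 + ‖y 1 - y 2‖ ^ 2 - 9) := by ring
  constructor
  · rw [hE, hT]
    linarith [hd1.1, hd2.1, hd3.1]
  constructor
  · -- equality implies all distances equal √3
    intro heq
    rw [hE, hT] at heq
    have hs1eq : ‖y 0 - y 1‖ ^ 2 = 3 := by
      by_contra hne'
      have := hd1.2 hne'
      linarith [hd2.1, hd3.1]
    have hs2eq : ‖y 0 - y 2‖ ^ 2 = 3 := by
      by_contra hne'
      have := hd2.2 hne'
      linarith [hd1.1, hd3.1]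
    have hs3eq : ‖y 1 - y 2‖ ^ 2 = 3 := by
      by_contra hne'
      have := hd3.2 hne'
      linarith [hd1.1, hd2.1]
    have e01 : ‖y 0 - y 1‖ = Real.sqrt 3 := by
      rw [← hs1eq, Real.sqrt_sq (norm_nonneg _)]
    have e02 : ‖y 0 - y 2‖ = Real.sqrt 3 := by
      rw [← hs2eq, Real.sqrt_sq (norm_nonneg _)]
    have e12 : ‖y 1 - y 2‖ = Real.sqrt 3 := by
      rw [← hs3eq, Real.sqrt_sq (norm_nonneg _)]
    have e10 : ‖y 1 - y 0‖ = Real.sqrt 3 := by rw [norm_sub_rev]; exact e01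
    have e20 : ‖y 2 - y 0‖ = Real.sqrt 3 := by rw [norm_sub_rev]; exact e02
    have e21 : ‖y 2 - y 1‖ = Real.sqrt 3 := by rw [norm_sub_rev]; exact e12
    intro j j' hjj'
    fin_cases j <;> fin_cases j' <;>
      first
        | exact absurd rfl hjj'
        | exact e01 | exact e02 | exact e12 | exact e10 | exact e20 | exact e21
  · -- all distances √3 implies equality
    intro hall
    have q1 : ‖y 0 - y 1‖ ^ 2 = 3 := by
      rw [hall 0 1 (by decide), Real.sq_sqrt (by norm_num : (3:ℝ) ≥ 0)]
    have q2 : ‖y 0 - y 2‖ ^ 2 = 3 := by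
      rw [hall 0 2 (by decide), Real.sq_sqrt (by norm_num : (3:ℝ) ≥ 0)]
    have q3 : ‖y 1 - y 2‖ ^ 2 = 3 := by
      rw [hall 1 2 (by decide), Real.sq_sqrt (by norm_num : (3:ℝ) ≥ 0)]
    rw [hE, q1, q2, q3, hT]
    ring
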